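/- With H, {s_a}, Π(x), Q as above, a vector s = Σ_a c_a s_a ∈ H satisfies the 'P_x' condition (s ⟂ G_x, i.e., ⟨s, ψ⟩_{L²} = 0 for all ψ ∈ H with ψ(x) = 0) if and only if c = V c where V_{ab} = ⟨s_a(x), Π(x)⁻¹ s_b(x)⟩. -/
import Mathlib


open scoped InnerProductSpace

/-- with `s_a = ev σ_a`, `Π(x)` invertible and
`V_{ab} = ⟨s_a(x), Π(x)⁻¹ s_b(x)⟩`, an element `s = Σ_a c_a σ_a` of `H` is
`L²`-orthogonal to `G_x = {ψ ∈ H : ψ(x) = 0}` if and only if `c = V c`. -/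
theorem Px_condition_iff_Vc_eq_c
    {H E : Type*}
    [NormedAddCommGroup H] [InnerProductSpace ℂ H] [FiniteDimensional ℂ H]
    [NormedAddCommGroup E] [InnerProductSpace ℂ E] [FiniteDimensional ℂ E]
    (N : ℕ) (σ : OrthonormalBasis (Fin N) ℂ H)
    (ev : H →ₗ[ℂ] E) (s : Fin N → E) (hs : ∀ a, s a = ev (σ a))
    (Pi PiInv : E →ₗ[ℂ] E)
    (hPi : ∀ v, Pi v = ∑ a, ⟪s a, v⟫_ℂ • s a)
    (hInv₁ : ∀ v, Pi (PiInv v) = v) (hInv₂ : ∀ v, PiInv (Pi v) = v)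
    (V : Matrix (Fin N) (Fin N) ℂ)
    (hV : ∀ a b, V a b = ⟪PiInv (s b), s a⟫_ℂ)
    (c : Fin N → ℂ) :
    (∀ ψ : H, ev ψ = 0 → ⟪ψ, ∑ a, c a • σ a⟫_ℂ = 0) ↔ Matrix.vecMul c V = c := by
  classical
  set u : H := ∑ a, c a • σ a with hu
  set w : E := ev u with hwdef
  have horth : ∀ i j : Fin N, ⟪σ i, σ j⟫_ℂ = if i = j then 1 else 0 := by
    intro i j
    rcases eq_or_ne i j with h | h
    · simp [h, σ.orthonormal.1 j, inner_self_eq_norm_sq_to_K]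
    · simp [h, σ.orthonormal.2 h]
  -- self-adjointness of Pi
  have hPiSA : ∀ v y : E, ⟪Pi v, y⟫_ℂ = ⟪v, Pi y⟫_ℂ := by
    intro v y
    rw [hPi v, hPi y, sum_inner, inner_sum]
    refine Finset.sum_congr rfl fun a _ => ?_
    rw [inner_smul_left, inner_smul_right, ← inner_conj_symm v (s a)]
    ring
  have hPiInvSA : ∀ v y : E, ⟪PiInv v, y⟫_ℂ = ⟪v, PiInv y⟫_ℂ := by
    intro v y
    calc ⟪PiInv v, y⟫_ℂ = ⟪PiInv v, Pi (PiInv y)⟫_ℂ := by rw [hInv₁]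
      _ = ⟪Pi (PiInv v), PiInv y⟫_ℂ := (hPiSA _ _).symm
      _ = ⟪v, PiInv y⟫_ℂ := by rw [hInv₁]
  -- ev of any ψ in terms of coefficients
  have hev : ∀ ψ : H, ev ψ = ∑ b, ⟪σ b, ψ⟫_ℂ • s b := by
    intro ψ
    conv_lhs => rw [← σ.sum_repr ψ]
    rw [map_sum]
    refine Finset.sum_congr rfl fun b _ => ?_
    rw [map_smul, σ.repr_apply_apply, hs]
  have hw' : w = ∑ a, c a • s a := by
    rw [hwdef, hu, map_sum]
    refine Finset.sum_congr rfl fun a _ => ?_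
    rw [map_smul, hs]
  -- vecMul identification
  have hvec : ∀ b, Matrix.vecMul c V b = ⟪PiInv (s b), w⟫_ℂ := by
    intro b
    rw [hw', inner_sum]
    simp only [Matrix.vecMul, dotProduct, hV, inner_smul_right]
  -- coefficient of u
  have hcoef : ∀ b, ⟪σ b, u⟫_ℂ = c b := by
    intro b
    rw [hu, inner_sum]
    simp [inner_smul_right, horth]
  -- key inner product formula: for any coefficients d
  have key : ∀ (d : Fin N → ℂ) (ψ : H),
      ⟪∑ b, d b • σ b, ψ⟫_ℂ = ∑ b, (starRingEnd ℂ (d b)) * ⟪σ b, ψ⟫_ℂ := by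
    intro d ψ
    rw [sum_inner]
    simp [inner_smul_left]
  have key2 : ∀ ψ : H, ⟪PiInv w, ev ψ⟫_ℂ
      = ∑ b, (starRingEnd ℂ ⟪PiInv (s b), w⟫_ℂ) * ⟪σ b, ψ⟫_ℂ := by
    intro ψ
    rw [hev ψ, inner_sum]
    refine Finset.sum_congr rfl fun b _ => ?_
    rw [inner_smul_right, hPiInvSA w (s b), ← inner_conj_symm (PiInv (s b)) w]
    simp [mul_comm]
  -- the representative t
  set t : H := ∑ b, ⟪PiInv (s b), w⟫_ℂ • σ b with ht
  have htpair : ∀ ψ : H, ⟪t, ψ⟫_ℂ = ⟪PiInv w, ev ψ⟫_ℂ := by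
    intro ψ
    rw [ht, key, key2]
  have hevt : ev t = w := by
    rw [ht, map_sum]
    have : ∀ b, ev (⟪PiInv (s b), w⟫_ℂ • σ b) = ⟪s b, PiInv w⟫_ℂ • s b := by
      intro b
      rw [map_smul, ← hs, hPiInvSA]
    rw [Finset.sum_congr rfl fun b _ => this b, ← hPi, hInv₁]
  constructor
  · intro hP
    have hker : ev (u - t) = 0 := by rw [map_sub, hevt, ← hwdef, sub_self]
    have h1 : ⟪u - t, u⟫_ℂ = 0 := hP _ hker
    have h2 : ⟪u - t, t⟫_ℂ = 0 := by
      rw [← inner_conj_symm, htpair, hker, inner_zero_right, map_zero]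
    have h3 : u = t := by
      have : ⟪u - t, u - t⟫_ℂ = 0 := by rw [inner_sub_right, h1, h2, sub_zero]
      exact sub_eq_zero.mp (inner_self_eq_zero.mp this)
    funext b
    rw [hvec b, ← hcoef b, h3, ht, inner_sum]
    simp [inner_smul_right, horth]
  · intro hc ψ hψ
    have hcb : ∀ b, c b = ⟪PiInv (s b), w⟫_ℂ := by
      intro b; rw [← congrFun hc b, hvec b]
    have : ⟪u, ψ⟫_ℂ = 0 := by
      rw [hu, key]
      rw [Finset.sum_congr rfl fun b _ => by rw [hcb b], ← key2, hψ,
        inner_zero_right]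
    rw [← inner_conj_symm, this, map_zero]
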